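/- Let t > 0 and let n ≥ 1. For all integers j, k with 0 ≤ j, k ≤ n−1, the series ∑_{z ∈ ℤ} ψ_k(z) · φ_j(z) converges absolutely and equals δ_{k,j} (1 if k = j and 0 otherwise). (Note that ψ_k(z) = 0 for z < 0, so the sum is effectively over z ≥ 0.) -/

import Mathlib

open Complex Metric Set

/-- `ψ_k(z) = ((-1)^k/(2πi)) ∮_{|w|=r} dw w^(-z-1) e^((w-1)t) ((w-1)w)^k`, with the
contour a positively oriented circle of radius `r ∈ (0,1)` centered at the origin. -/
noncomputable def psi (t r : ℝ) (k z : ℤ) : ℂ :=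
  ((-1 : ℂ) ^ k / (2 * ↑Real.pi * Complex.I)) *
    ∮ w in C(0, r), w ^ (-z - 1) * Complex.exp ((w - 1) * ↑t) * ((w - 1) * w) ^ k

/-- `φ_k(z) = ((-1)^k/(2πi)) ∮_{|v|=ρ} dv v⁻¹ (1+2v) e^(-vt) (1+v)^(z-1) (v(1+v))^(-k)`,
with the contour a positively oriented circle of radius `ρ ∈ (0,1)` centered at the origin. -/
noncomputable def phi (t ρ : ℝ) (k : ℕ) (z : ℤ) : ℂ :=
  ((-1 : ℂ) ^ k / (2 * ↑Real.pi * Complex.I)) *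
    ∮ v in C(0, ρ), v⁻¹ * (1 + 2 * v) * Complex.exp (-v * ↑t) * (1 + v) ^ (z - 1) *
      (v * (1 + v)) ^ (-(k : ℤ))

lemma psi_integrand_diff (t : ℝ) (k : ℕ) (z : ℤ) {w : ℂ} (hw : w ≠ 0) :
    DifferentiableAt ℂ
      (fun w : ℂ => w ^ (-z - 1) * Complex.exp ((w - 1) * (t:ℂ)) * ((w - 1) * w) ^ ((k:ℤ))) w := by
  apply DifferentiableAt.mul
  · apply DifferentiableAt.mul
    · exact differentiableAt_zpow.2 (Or.inl hw)
    · exact (((differentiableAt_id.sub_const 1).mul_const (t:ℂ)).cexp)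
  · exact (((differentiableAt_id.sub_const 1).mul differentiableAt_id).zpow
      (Or.inr (Int.natCast_nonneg k)))

lemma psi_radius (t : ℝ) (k : ℕ) (z : ℤ) {r R : ℝ} (h0 : 0 < r) (hrR : r ≤ R) :
    psi t r (k:ℤ) z = psi t R (k:ℤ) z := by
  unfold psi
  congr 1
  refine (Complex.circleIntegral_eq_of_differentiable_on_annulus_off_countable h0 hrR
    Set.countable_empty ?_ ?_).symm
  · intro w hw
    have hw0 : w ≠ 0 := by
      intro h
      rw [h] at hw
      simp only [mem_diff, mem_closedBall, mem_ball] at hw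
      have := hw.2
      simp at this
      linarith
    exact (psi_integrand_diff t k z hw0).continuousAt.continuousWithinAt
  · intro w hw
    have hw0 : w ≠ 0 := by
      intro h
      rw [h] at hw
      simp only [mem_diff, mem_ball, mem_closedBall] at hw
      have := hw.1.2
      simp at this
      linarith
    exact psi_integrand_diff t k z hw0

lemma psi_neg (t r : ℝ) (hr : 0 ≤ r) (k : ℕ) {z : ℤ} (hz : z < 0) :
    psi t r (k:ℤ) z = 0 := by
  unfold psi
  rw [Complex.circleIntegral_eq_zero_of_differentiable_on_off_countable hr
    Set.countable_empty ?_ ?_, mul_zero]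
  · intro w hw
    refine DifferentiableAt.continuousAt (𝕜 := ℂ) ?_ |>.continuousWithinAt
    apply DifferentiableAt.mul
    · apply DifferentiableAt.mul
      · exact differentiableAt_zpow.2 (Or.inr (by omega))
      · exact (((differentiableAt_id.sub_const 1).mul_const (t:ℂ)).cexp)
    · exact (((differentiableAt_id.sub_const 1).mul differentiableAt_id).zpow
        (Or.inr (Int.natCast_nonneg k)))
  · intro w hw
    apply DifferentiableAt.mul
    · apply DifferentiableAt.mul
      · exact differentiableAt_zpow.2 (Or.inr (by omega))
      · exact (((differentiableAt_id.sub_const 1).mul_const (t:ℂ)).cexp)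
    · exact (((differentiableAt_id.sub_const 1).mul differentiableAt_id).zpow
        (Or.inr (Int.natCast_nonneg k)))



lemma norm_psi_integrand_le (t : ℝ) (ht : 0 < t) (k : ℕ) (z : ℕ) {w : ℂ}
    (hw : ‖w‖ = 2) :
    ‖w ^ (-(z:ℤ) - 1) * Complex.exp ((w - 1) * (t:ℂ)) * ((w - 1) * w) ^ ((k:ℤ))‖ ≤
      (1/2)^z * (1/2) * (Real.exp (3*t) * 6^k) := by
  have h1 : ‖w ^ (-(z:ℤ) - 1)‖ = (1/2)^z * (1/2) := by
    rw [norm_zpow, hw]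
    rw [zpow_sub₀ (by norm_num : (2:ℝ) ≠ 0), zpow_neg, zpow_natCast]
    simp [div_pow]
    ring
  have h2 : ‖Complex.exp ((w - 1) * (t:ℂ))‖ ≤ Real.exp (3*t) := by
    rw [Complex.norm_exp]
    apply Real.exp_le_exp.2
    have : ((w - 1) * (t:ℂ)).re = (w.re - 1) * t := by
      simp [Complex.mul_re]
    rw [this]
    have hre : w.re ≤ 2 := by
      calc w.re ≤ ‖w‖ := Complex.re_le_norm w
      _ = 2 := hw
    nlinarith
  have h3 : ‖((w - 1) * w) ^ ((k:ℤ))‖ ≤ 6^k := by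
    rw [norm_zpow, zpow_natCast]
    apply pow_le_pow_left₀ (norm_nonneg _)
    rw [norm_mul]
    have : ‖w - 1‖ ≤ 3 := by
      calc ‖w - 1‖ ≤ ‖w‖ + ‖(1:ℂ)‖ := norm_sub_le _ _
      _ = 3 := by rw [hw]; norm_num
    calc ‖w - 1‖ * ‖w‖ ≤ 3 * 2 := by
          apply mul_le_mul this (le_of_eq ?_) (norm_nonneg _) (by norm_num)
          rw [hw]
      _ = 6 := by norm_num
  calc ‖w ^ (-(z:ℤ) - 1) * Complex.exp ((w - 1) * (t:ℂ)) * ((w - 1) * w) ^ ((k:ℤ))‖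
      = ‖w ^ (-(z:ℤ) - 1)‖ * ‖Complex.exp ((w - 1) * (t:ℂ))‖ * ‖((w - 1) * w) ^ ((k:ℤ))‖ := by
        rw [norm_mul, norm_mul]
    _ ≤ ((1/2)^z * (1/2)) * Real.exp (3*t) * 6^k := by
        apply mul_le_mul (by rw [h1]; exact mul_le_mul_of_nonneg_left h2 (by positivity)) h3
          (norm_nonneg _) (by positivity)
    _ = (1/2)^z * (1/2) * (Real.exp (3*t) * 6^k) := by ring

lemma norm_psi_le (t : ℝ) (ht : 0 < t) (k : ℕ) (z : ℕ) :
    ‖psi t 2 (k:ℤ) (z:ℤ)‖ ≤ Real.exp (3*t) * 6^k * (1/2)^z := by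
  unfold psi
  rw [norm_mul]
  have hc : ‖((-1 : ℂ) ^ ((k:ℤ)) / (2 * ↑Real.pi * Complex.I))‖ = (2 * Real.pi)⁻¹ := by
    rw [norm_div, norm_zpow]
    simp [Real.pi_pos.le, abs_of_pos Real.pi_pos]
  rw [hc]
  have hint : ‖∮ w in C(0, (2:ℝ)), w ^ (-(z:ℤ) - 1) * Complex.exp ((w - 1) * (t:ℂ)) *
      ((w - 1) * w) ^ ((k:ℤ))‖ ≤ 2 * Real.pi * 2 * ((1/2)^z * (1/2) * (Real.exp (3*t) * 6^k)) := by
    apply circleIntegral.norm_integral_le_of_norm_le_const (by norm_num)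
    intro w hw
    have : ‖w‖ = 2 := by
      simpa [Complex.dist_eq] using hw
    exact norm_psi_integrand_le t ht k z this
  calc (2 * Real.pi)⁻¹ * ‖_‖ ≤ (2 * Real.pi)⁻¹ *
      (2 * Real.pi * 2 * ((1/2)^z * (1/2) * (Real.exp (3*t) * 6^k))) := by
        exact mul_le_mul_of_nonneg_left hint (by positivity)
    _ = Real.exp (3*t) * 6^k * (1/2)^z := by
        field_simp


lemma one_add_bounds {ρ : ℝ} (hρ : ρ ∈ Set.Ioo (0:ℝ) 1) {v : ℂ} (hv : ‖v‖ = ρ) :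
    ‖1 + v‖ ≤ 1 + ρ ∧ 1 - ρ ≤ ‖1 + v‖ ∧ (1 + v) ≠ 0 ∧ v ≠ 0 := by
  have h1 : ‖1 + v‖ ≤ 1 + ρ := by
    calc ‖1 + v‖ ≤ ‖1‖ + ‖v‖ := norm_add_le _ _
      _ = 1 + ρ := by rw [hv]; simp
  have h2 : 1 - ρ ≤ ‖1 + v‖ := by
    have : ‖(1 + v) - v‖ ≤ ‖1 + v‖ + ‖v‖ :=
      norm_sub_le _ _
    simp only [add_sub_cancel_right] at this
    simp only [norm_one] at this
    linarith [hv ▸ this]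
  refine ⟨h1, h2, ?_, ?_⟩
  · intro h
    rw [h] at h2; simp at h2; linarith [hρ.2]
  · intro h
    rw [h] at hv; simp at hv; linarith [hρ.1, hv]

lemma hasSum_F (t : ℝ) (k : ℕ) {ρ : ℝ} (hρ : ρ ∈ Set.Ioo (0:ℝ) 1) {v w : ℂ}
    (hv : ‖v‖ = ρ) (hw : ‖w‖ = 2) :
    HasSum (fun z : ℕ => w ^ (-(z:ℤ) - 1) * Complex.exp ((w - 1) * (t:ℂ)) *
        ((w - 1) * w) ^ ((k:ℤ)) * (1 + v) ^ ((z:ℤ) - 1))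
      (Complex.exp ((w - 1) * (t:ℂ)) * ((w - 1) * w) ^ ((k:ℤ)) * (1 + v)⁻¹ * (w - (1 + v))⁻¹) := by
  obtain ⟨h1v, h1v', hv1, hv0⟩ := one_add_bounds hρ hv
  have hw0 : w ≠ 0 := by
    intro h; rw [h] at hw; simp at hw
  have hwv : w - (1 + v) ≠ 0 := by
    intro h
    have : w = 1 + v := by linear_combination h
    rw [this] at hw
    linarith [hρ.2, hw ▸ h1v]
  set A : ℂ := Complex.exp ((w - 1) * (t:ℂ)) * ((w - 1) * w) ^ ((k:ℤ)) * (1 + v)⁻¹ * w⁻¹ with hA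
  have hgeo : HasSum (fun z : ℕ => A * ((1 + v)/w)^z) (A * (1 - (1+v)/w)⁻¹) := by
    apply HasSum.mul_left
    apply hasSum_geometric_of_norm_lt_one
    rw [norm_div, hw]
    rw [div_lt_one (by norm_num)]
    linarith [hρ.2]
  have heq : ∀ z : ℕ, w ^ (-(z:ℤ) - 1) * Complex.exp ((w - 1) * (t:ℂ)) *
      ((w - 1) * w) ^ ((k:ℤ)) * (1 + v) ^ ((z:ℤ) - 1) = A * ((1 + v)/w)^z := by
    intro z
    have e1 : w ^ (-(z:ℤ) - 1) = (w^z)⁻¹ * w⁻¹ := by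
      rw [show -(z:ℤ) - 1 = -((z:ℤ) + 1) by ring, zpow_neg, zpow_add₀ hw0, zpow_natCast,
        zpow_one, mul_inv]
    have e2 : (1 + v) ^ ((z:ℤ) - 1) = (1+v)^z * (1+v)⁻¹ := by
      rw [zpow_sub₀ hv1, zpow_natCast, zpow_one]
      ring
    rw [e1, e2, hA, div_pow, div_eq_mul_inv]
    ring
  have hval : A * (1 - (1+v)/w)⁻¹ =
      Complex.exp ((w - 1) * (t:ℂ)) * ((w - 1) * w) ^ ((k:ℤ)) * (1 + v)⁻¹ * (w - (1 + v))⁻¹ := by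
    rw [hA]
    have : (1 - (1+v)/w) = (w - (1+v))/w := by field_simp
    rw [this]
    field_simp
  rw [← hval]
  exact hgeo.congr_fun heq

lemma norm_one_add_zpow_le {ρ : ℝ} (hρ : ρ ∈ Set.Ioo (0:ℝ) 1) {v : ℂ}
    (hv : ‖v‖ = ρ) (z : ℕ) :
    ‖(1 + v) ^ ((z:ℤ) - 1)‖ ≤ (1 + ρ)^z * (1 - ρ)⁻¹ := by
  obtain ⟨h1v, h1v', hv1, hv0⟩ := one_add_bounds hρ hv
  have h0 : (0:ℝ) < 1 - ρ := by linarith [hρ.2]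
  rw [zpow_sub₀ hv1, zpow_natCast, zpow_one, norm_div]
  have hnum : ‖(1 + v)^z‖ ≤ (1 + ρ)^z := by
    rw [norm_pow]
    exact pow_le_pow_left₀ (norm_nonneg _) h1v z
  have hden : 1 - ρ ≤ ‖(1 + v)‖ := by linarith
  calc ‖(1 + v)^z‖ / ‖(1 + v)‖ ≤ (1 + ρ)^z / (1 - ρ) :=
        div_le_div₀ (pow_nonneg (by linarith [hρ.1]) z) hnum h0 hden
    _ = (1 + ρ)^z * (1 - ρ)⁻¹ := div_eq_mul_inv _ _

lemma hasSum_psi_mul (t : ℝ) (ht : 0 < t) (k : ℕ) {ρ : ℝ} (hρ : ρ ∈ Set.Ioo (0:ℝ) 1) {v : ℂ}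
    (hv : ‖v‖ = ρ) :
    HasSum (fun z : ℕ => psi t 2 (k:ℤ) (z:ℤ) * (1 + v) ^ ((z:ℤ) - 1))
      ((-1 : ℂ) ^ ((k:ℤ)) *
        (Complex.exp (v * (t:ℂ)) * (v * (1 + v)) ^ ((k:ℤ)) * (1 + v)⁻¹)) := by
  obtain ⟨h1v, h1v', hv1, hv0⟩ := one_add_bounds hρ hv
  set c : ℂ := (-1 : ℂ) ^ ((k:ℤ)) / (2 * ↑Real.pi * Complex.I) with hc
  set F : ℕ → ℂ → ℂ := fun z w => w ^ (-(z:ℤ) - 1) * Complex.exp ((w - 1) * (t:ℂ)) *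
      ((w - 1) * w) ^ ((k:ℤ)) * (1 + v) ^ ((z:ℤ) - 1) with hF
  set L : ℂ → ℂ := fun w => Complex.exp ((w - 1) * (t:ℂ)) * ((w - 1) * w) ^ ((k:ℤ)) *
      (1 + v)⁻¹ * (w - (1 + v))⁻¹ with hL
  have hcm : ∀ θ : ℝ, ‖circleMap 0 2 θ‖ = 2 := by
    intro θ; rw [norm_circleMap_zero]; norm_num
  have hcm0 : ∀ θ : ℝ, circleMap 0 2 θ ≠ 0 := by
    intro θ; exact circleMap_ne_center (by norm_num)
  -- Step A: swap sum and circle integral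
  have stepA : HasSum (fun z : ℕ => ∮ w in C(0, (2:ℝ)), F z w) (∮ w in C(0, (2:ℝ)), L w) := by
    refine intervalIntegral.hasSum_integral_of_dominated_convergence
      (fun z _ => (Real.exp (3*t) * 6^k * (1 - ρ)⁻¹) * (((1+ρ)/2)^z))
      (fun z => ?_) (fun z => ?_) ?_ ?_ ?_
    · apply Continuous.aestronglyMeasurable
      apply Continuous.fun_smul
      · exact Continuous.congr ((continuous_circleMap 0 2).mul continuous_const)
          (fun θ => (deriv_circleMap _ _ _).symm)
      · rw [hF]
        apply Continuous.mul
        apply Continuous.mul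
        apply Continuous.mul
        · exact Continuous.zpow₀ (continuous_circleMap 0 2) _ (fun θ => Or.inl (hcm0 θ))
        · exact (Complex.continuous_exp.comp (((continuous_circleMap 0 2).sub
            continuous_const).mul continuous_const))
        · exact Continuous.zpow₀ (((continuous_circleMap 0 2).sub continuous_const).mul
            (continuous_circleMap 0 2)) _ (fun θ => Or.inr (Int.natCast_nonneg k))
        · exact continuous_const
    · filter_upwards with θ hθ
      rw [norm_smul]
      have hd : ‖deriv (circleMap 0 2) θ‖ = 2 := by
        rw [deriv_circleMap, norm_mul,
          norm_circleMap_zero, Complex.norm_I]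
        norm_num
      rw [hd, hF]
      set w := circleMap 0 2 θ
      calc 2 * ‖w ^ (-(z:ℤ) - 1) * Complex.exp ((w - 1) * (t:ℂ)) * ((w - 1) * w) ^ ((k:ℤ)) *
            (1 + v) ^ ((z:ℤ) - 1)‖
          = 2 * (‖w ^ (-(z:ℤ) - 1) * Complex.exp ((w - 1) * (t:ℂ)) * ((w - 1) * w) ^ ((k:ℤ))‖ *
            ‖(1 + v) ^ ((z:ℤ) - 1)‖) := by rw [norm_mul]
        _ ≤ 2 * (((1/2)^z * (1/2) * (Real.exp (3*t) * 6^k)) * ((1 + ρ)^z * (1 - ρ)⁻¹)) := by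
            apply mul_le_mul_of_nonneg_left ?_ (by norm_num)
            apply mul_le_mul (norm_psi_integrand_le t ht k z (hcm θ))
              (norm_one_add_zpow_le hρ hv z) (norm_nonneg _) (by positivity)
        _ = (Real.exp (3*t) * 6^k * (1 - ρ)⁻¹) * (((1+ρ)/2)^z) := by
            have hsplit : (((1+ρ)/2 : ℝ))^z = (1/2)^z * (1+ρ)^z := by
              rw [← mul_pow]; ring_nf
            rw [hsplit]; ring
    · filter_upwards with θ hθ
      apply Summable.mul_left
      apply summable_geometric_of_lt_one (by linarith [hρ.1])
      rw [div_lt_one (by norm_num)]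
      linarith [hρ.2]
    · exact intervalIntegrable_const
    · filter_upwards with θ hθ
      exact (hasSum_F t k hρ hv (hcm θ)).const_smul _
  -- Step B: Cauchy integral formula
  have hball : (1 + v) ∈ ball (0:ℂ) 2 := by
    rw [mem_ball, dist_zero_right]
    linarith [hρ.2]
  have stepB : (∮ w in C(0, (2:ℝ)), L w) =
      (2 * ↑Real.pi * Complex.I) *
        (Complex.exp (v * (t:ℂ)) * (v * (1 + v)) ^ ((k:ℤ)) * (1 + v)⁻¹) := by
    have hre : (∮ w in C(0, (2:ℝ)), L w) = ∮ w in C(0, (2:ℝ)),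
        (w - (1 + v))⁻¹ • (Complex.exp ((w - 1) * (t:ℂ)) * ((w - 1) * w) ^ ((k:ℤ)) *
          (1 + v)⁻¹) := by
      apply circleIntegral.integral_congr (by norm_num)
      intro w hw
      simp only [hL, smul_eq_mul]
      ring
    rw [hre]
    have hdiff : DifferentiableOn ℂ (fun w => Complex.exp ((w - 1) * (t:ℂ)) *
        ((w - 1) * w) ^ ((k:ℤ)) * (1 + v)⁻¹) (closedBall (0:ℂ) 2) := by
      apply Differentiable.differentiableOn
      intro w
      apply DifferentiableAt.mul_const
      apply DifferentiableAt.mul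
      · exact (((differentiableAt_id.sub_const 1).mul_const (t:ℂ)).cexp)
      · exact (((differentiableAt_id.sub_const 1).mul differentiableAt_id).zpow
          (Or.inr (Int.natCast_nonneg k)))
    rw [hdiff.circleIntegral_sub_inv_smul hball]
    rw [smul_eq_mul]
    congr 1
    rw [add_sub_cancel_left]
  -- combine
  have key : HasSum (fun z : ℕ => c * ∮ w in C(0, (2:ℝ)), F z w)
      (c * ∮ w in C(0, (2:ℝ)), L w) := stepA.mul_left c
  rw [stepB] at key
  have h2pi : (2 * ↑Real.pi * Complex.I) ≠ 0 := by
    simp [Real.pi_ne_zero, Complex.I_ne_zero, Complex.ofReal_ne_zero]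
  have hcval : c * ((2 * ↑Real.pi * Complex.I) *
      (Complex.exp (v * (t:ℂ)) * (v * (1 + v)) ^ ((k:ℤ)) * (1 + v)⁻¹)) =
      (-1 : ℂ) ^ ((k:ℤ)) *
        (Complex.exp (v * (t:ℂ)) * (v * (1 + v)) ^ ((k:ℤ)) * (1 + v)⁻¹) := by
    rw [hc]
    field_simp
  rw [hcval] at key
  apply key.congr_fun
  intro z
  have : psi t 2 ((k:ℕ):ℤ) (z:ℤ) = c * ∮ w in C(0, (2:ℝ)),
      w ^ (-(z:ℤ) - 1) * Complex.exp ((w - 1) * (t:ℂ)) * ((w - 1) * w) ^ ((k:ℤ)) := rfl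
  rw [this, mul_assoc]
  congr 1
  rw [hF]
  have := circleIntegral.integral_smul_const (fun w : ℂ =>
      w ^ (-(z:ℤ) - 1) * Complex.exp ((w - 1) * (t:ℂ)) * ((w - 1) * w) ^ ((k:ℤ)))
      ((1 + v) ^ ((z:ℤ) - 1)) 0 (2:ℝ)
  simp only [smul_eq_mul] at this
  rw [this]


lemma norm_phi_integrand_le (t : ℝ) (ht : 0 < t) (j : ℕ) (z : ℕ) {ρ : ℝ}
    (hρ : ρ ∈ Set.Ioo (0:ℝ) 1) {v : ℂ} (hv : ‖v‖ = ρ) :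
    ‖v⁻¹ * (1 + 2*v) * Complex.exp (-v * (t:ℂ)) * (1 + v) ^ ((z:ℤ) - 1) *
        (v * (1 + v)) ^ (-(j : ℤ))‖ ≤
      (ρ⁻¹ * 3 * Real.exp t * (1 - ρ)⁻¹ * ((ρ * (1-ρ))⁻¹)^j) * (1 + ρ)^z := by
  obtain ⟨h1v, h1v', hv1, hv0⟩ := one_add_bounds hρ hv
  have hρ0 := hρ.1
  have hρ1 := hρ.2
  have e1 : ‖v⁻¹‖ = ρ⁻¹ := by rw [norm_inv, hv]
  have e2 : ‖(1 + 2*v : ℂ)‖ ≤ 3 := by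
    calc ‖(1 + 2*v : ℂ)‖ ≤ ‖(1:ℂ)‖ + ‖2*v‖ := norm_add_le _ _
      _ = 1 + 2*ρ := by
          rw [norm_mul, hv]
          norm_num
      _ ≤ 3 := by linarith
  have e3 : ‖Complex.exp (-v * (t:ℂ))‖ ≤ Real.exp t := by
    rw [Complex.norm_exp]
    apply Real.exp_le_exp.2
    have hre : (-v * (t:ℂ)).re = -v.re * t := by simp [Complex.mul_re]
    rw [hre]
    have : -v.re ≤ ρ := by
      calc -v.re = (-v).re := by simp
        _ ≤ ‖-v‖ := Complex.re_le_norm _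
        _ = ρ := by rw [norm_neg, hv]
    nlinarith
  have e4 : ‖(1 + v) ^ ((z:ℤ) - 1)‖ ≤ (1 + ρ)^z * (1 - ρ)⁻¹ := norm_one_add_zpow_le hρ hv z
  have e5 : ‖(v * (1 + v)) ^ (-(j : ℤ))‖ ≤ ((ρ * (1-ρ))⁻¹)^j := by
    rw [zpow_neg, zpow_natCast, ← inv_pow, norm_pow]
    apply pow_le_pow_left₀ (norm_nonneg _)
    rw [norm_inv, norm_mul]
    apply inv_anti₀ (by nlinarith [hρ.1, hρ.2])
    rw [hv]
    have : 1 - ρ ≤ ‖1 + v‖ := h1v'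
    nlinarith
  calc ‖v⁻¹ * (1 + 2*v) * Complex.exp (-v * (t:ℂ)) * (1 + v) ^ ((z:ℤ) - 1) *
        (v * (1 + v)) ^ (-(j : ℤ))‖
      = ‖v⁻¹‖ * ‖(1 + 2*v : ℂ)‖ * ‖Complex.exp (-v * (t:ℂ))‖ * ‖(1 + v) ^ ((z:ℤ) - 1)‖ *
        ‖(v * (1 + v)) ^ (-(j : ℤ))‖ := by simp only [norm_mul]
    _ ≤ ρ⁻¹ * 3 * Real.exp t * ((1 + ρ)^z * (1 - ρ)⁻¹) * ((ρ * (1-ρ))⁻¹)^j := by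
        rw [e1]
        have h3 : (0:ℝ) < 1 - ρ := by linarith
        gcongr <;> first | exact e2 | exact e3 | exact e4 | exact e5 | positivity |
          (apply inv_nonneg.2; linarith) | linarith
    _ = (ρ⁻¹ * 3 * Real.exp t * (1 - ρ)⁻¹ * ((ρ * (1-ρ))⁻¹)^j) * (1 + ρ)^z := by ring

lemma circleIntegral_add' {f g : ℂ → ℂ} {c : ℂ} {R : ℝ} (hf : CircleIntegrable f c R)
    (hg : CircleIntegrable g c R) :
    (∮ z in C(c, R), (f z + g z)) = (∮ z in C(c, R), f z) + ∮ z in C(c, R), g z := by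
  simp only [circleIntegral, smul_add]
  exact intervalIntegral.integral_add hf.out hg.out

/-- Final residue computation. -/
lemma final_integral {ρ : ℝ} (hρ : ρ ∈ Set.Ioo (0:ℝ) 1) (m : ℤ) :
    (∮ v in C(0, ρ), v⁻¹ * (1 + v)⁻¹ * (1 + 2*v) * (v * (1 + v)) ^ m) =
      if m = 0 then 2 * ↑Real.pi * Complex.I else 0 := by
  have hρ0 := hρ.1
  have hρ1 := hρ.2
  have hsp : ∀ v : ℂ, v ∈ sphere (0:ℂ) ρ → ‖v‖ = ρ := by
    intro v hv
    simpa [Complex.dist_eq] using hv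
  rcases eq_or_ne m 0 with hm | hm
  · subst hm
    simp only [zpow_zero, mul_one, if_true]
    have hcongr : (∮ v in C(0, ρ), v⁻¹ * (1 + v)⁻¹ * (1 + 2*v)) =
        ∮ v in C(0, ρ), (v⁻¹ + (1 + v)⁻¹) := by
      apply circleIntegral.integral_congr hρ0.le
      intro v hv
      obtain ⟨h1v, h1v', hv1, hv0⟩ := one_add_bounds hρ (hsp v hv)
      field_simp
      ring
    rw [hcongr]
    have hint1 : CircleIntegrable (fun v : ℂ => v⁻¹) 0 ρ := by
      apply ContinuousOn.circleIntegrable hρ0.le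
      intro v hv
      obtain ⟨_, _, _, hv0⟩ := one_add_bounds hρ (hsp v hv)
      exact (continuousAt_id.inv₀ hv0).continuousWithinAt
    have hint2 : CircleIntegrable (fun v : ℂ => (1 + v)⁻¹) 0 ρ := by
      apply ContinuousOn.circleIntegrable hρ0.le
      intro v hv
      obtain ⟨_, _, hv1, _⟩ := one_add_bounds hρ (hsp v hv)
      exact ((continuousAt_const.add continuousAt_id).inv₀ hv1).continuousWithinAt
    rw [circleIntegral_add' hint1 hint2]
    have h1 : (∮ v in C(0, ρ), v⁻¹) = 2 * ↑Real.pi * Complex.I := by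
      have := circleIntegral.integral_sub_inv_of_mem_ball
        (c := (0:ℂ)) (w := (0:ℂ)) (R := ρ) (by simpa using hρ0)
      simpa using this
    have h2 : (∮ v in C(0, ρ), (1 + v)⁻¹) = 0 := by
      apply Complex.circleIntegral_eq_zero_of_differentiable_on_off_countable hρ0.le
        Set.countable_empty
      · intro v hv
        have hv1 : (1 + v) ≠ 0 := by
          intro h
          have h1 : ‖v‖ ≤ ρ := by
            simpa [Complex.dist_eq] using hv
          have : v = -1 := by linear_combination h
          rw [this] at h1
          simp at h1
          linarith
        exact ((continuousAt_const.add continuousAt_id).inv₀ hv1).continuousWithinAt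
      · intro v hv
        have hv1 : (1 + v) ≠ 0 := by
          intro h
          have h1 : ‖v‖ < ρ := by
            simpa [Complex.dist_eq] using hv.1
          have : v = -1 := by linear_combination h
          rw [this] at h1
          simp at h1
          linarith
        exact (differentiableAt_const _ |>.add differentiableAt_id).inv hv1
    rw [h1, h2, add_zero]
  · rw [if_neg hm]
    apply circleIntegral.integral_eq_zero_of_hasDerivWithinAt hρ0.le
      (f := fun v : ℂ => (m:ℂ)⁻¹ * (v * (1 + v)) ^ m)
    intro v hv
    obtain ⟨h1v, h1v', hv1, hv0⟩ := one_add_bounds hρ (hsp v hv)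
    have hu0 : v * (1 + v) ≠ 0 := mul_ne_zero hv0 hv1
    have hu : HasDerivAt (fun v : ℂ => v * (1 + v)) (1 + 2*v) v := by
      exact ((hasDerivAt_id v).mul ((hasDerivAt_id v).const_add 1)).congr_deriv (by
        simp only [id_eq]
        ring)
    have hz : HasDerivAt (fun x : ℂ => x ^ m) ((m:ℂ) * (v * (1 + v)) ^ (m - 1)) (v * (1 + v)) :=
      hasDerivAt_zpow m _ (Or.inl hu0)
    have hcomp : HasDerivAt (fun v : ℂ => (v * (1 + v)) ^ m)
        ((m:ℂ) * (v * (1 + v)) ^ (m - 1) * (1 + 2*v)) v := HasDerivAt.comp (h₂ := fun x : ℂ => x ^ m) v hz hu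
    have hfinal : HasDerivAt (fun v : ℂ => (m:ℂ)⁻¹ * (v * (1 + v)) ^ m)
        (v⁻¹ * (1 + v)⁻¹ * (1 + 2*v) * (v * (1 + v)) ^ m) v := by
      have := hcomp.const_mul ((m:ℂ)⁻¹)
      refine this.congr_deriv ?_
      symm
      have hm' : (m:ℂ) ≠ 0 := Int.cast_ne_zero.2 hm
      rw [zpow_sub₀ hu0, zpow_one]
      field_simp
    exact hfinal.hasDerivWithinAt

lemma hasSum_outer (t : ℝ) (ht : 0 < t) (k j : ℕ) {ρ : ℝ} (hρ : ρ ∈ Set.Ioo (0:ℝ) 1) :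
    HasSum (fun z : ℕ => psi t 2 (k:ℤ) (z:ℤ) * phi t ρ j (z:ℤ))
      (((-1 : ℂ) ^ j / (2 * ↑Real.pi * Complex.I)) *
        ∮ v in C(0, ρ),
          ((-1 : ℂ) ^ ((k:ℤ)) * (Complex.exp (v * (t:ℂ)) * (v * (1 + v)) ^ ((k:ℤ)) * (1 + v)⁻¹)) *
            (v⁻¹ * (1 + 2*v) * Complex.exp (-v * (t:ℂ)) * (v * (1 + v)) ^ (-(j : ℤ)))) := by
  have hρ0 := hρ.1
  have hρ1 := hρ.2
  set cj : ℂ := (-1 : ℂ) ^ j / (2 * ↑Real.pi * Complex.I) with hcj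
  have hcm : ∀ θ : ℝ, ‖circleMap 0 ρ θ‖ = ρ := by
    intro θ; rw [norm_circleMap_zero, abs_of_pos hρ0]
  -- the swap of sum and integral
  have stepA : HasSum
      (fun z : ℕ => ∮ v in C(0, ρ), psi t 2 (k:ℤ) (z:ℤ) *
        (v⁻¹ * (1 + 2*v) * Complex.exp (-v * (t:ℂ)) * (1 + v) ^ ((z:ℤ) - 1) *
          (v * (1 + v)) ^ (-(j : ℤ))))
      (∮ v in C(0, ρ),
        ((-1 : ℂ) ^ ((k:ℤ)) * (Complex.exp (v * (t:ℂ)) * (v * (1 + v)) ^ ((k:ℤ)) * (1 + v)⁻¹)) *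
          (v⁻¹ * (1 + 2*v) * Complex.exp (-v * (t:ℂ)) * (v * (1 + v)) ^ (-(j : ℤ)))) := by
    refine intervalIntegral.hasSum_integral_of_dominated_convergence
      (fun z _ => (ρ * (Real.exp (3*t) * 6^k) *
        (ρ⁻¹ * 3 * Real.exp t * (1 - ρ)⁻¹ * ((ρ * (1-ρ))⁻¹)^j)) * (((1+ρ)/2)^z))
      (fun z => ?_) (fun z => ?_) ?_ ?_ ?_
    · apply Continuous.aestronglyMeasurable
      apply Continuous.fun_smul
      · exact Continuous.congr ((continuous_circleMap 0 ρ).mul continuous_const)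
          (fun θ => (deriv_circleMap _ _ _).symm)
      · apply Continuous.mul continuous_const
        have hne : ∀ θ : ℝ, circleMap 0 ρ θ ≠ 0 := fun θ =>
          circleMap_ne_center (ne_of_gt hρ0)
        have hne1 : ∀ θ : ℝ, 1 + circleMap 0 ρ θ ≠ 0 := fun θ =>
          (one_add_bounds hρ (hcm θ)).2.2.1
        apply Continuous.mul
        apply Continuous.mul
        apply Continuous.mul
        apply Continuous.mul
        · exact Continuous.inv₀ (continuous_circleMap 0 ρ) hne
        · exact continuous_const.add (continuous_const.mul (continuous_circleMap 0 ρ))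
        · exact Complex.continuous_exp.comp ((continuous_circleMap 0 ρ).neg.mul continuous_const)
        · exact Continuous.zpow₀ (continuous_const.add (continuous_circleMap 0 ρ)) _
            (fun θ => Or.inl (hne1 θ))
        · exact Continuous.zpow₀ ((continuous_circleMap 0 ρ).mul
            (continuous_const.add (continuous_circleMap 0 ρ))) _
            (fun θ => Or.inl (mul_ne_zero (hne θ) (hne1 θ)))
    · filter_upwards with θ hθ
      rw [norm_smul]
      have hd : ‖deriv (circleMap 0 ρ) θ‖ = ρ := by
        rw [deriv_circleMap, norm_mul,
          norm_circleMap_zero, Complex.norm_I, abs_of_pos hρ0]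
        norm_num
      rw [hd, norm_mul]
      set v := circleMap 0 ρ θ
      have b1 : ‖psi t 2 (k:ℤ) (z:ℤ)‖ ≤ Real.exp (3*t) * 6^k * (1/2)^z := norm_psi_le t ht k z
      have b2 := norm_phi_integrand_le t ht j z hρ (hcm θ)
      calc ρ * (‖psi t 2 (k:ℤ) (z:ℤ)‖ * ‖v⁻¹ * (1 + 2*v) * Complex.exp (-v * (t:ℂ)) *
            (1 + v) ^ ((z:ℤ) - 1) * (v * (1 + v)) ^ (-(j : ℤ))‖)
          ≤ ρ * ((Real.exp (3*t) * 6^k * (1/2)^z) *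
            ((ρ⁻¹ * 3 * Real.exp t * (1 - ρ)⁻¹ * ((ρ * (1-ρ))⁻¹)^j) * (1 + ρ)^z)) := by
            apply mul_le_mul_of_nonneg_left ?_ hρ0.le
            exact mul_le_mul b1 b2 (norm_nonneg _) (by positivity)
        _ = (ρ * (Real.exp (3*t) * 6^k) *
            (ρ⁻¹ * 3 * Real.exp t * (1 - ρ)⁻¹ * ((ρ * (1-ρ))⁻¹)^j)) * (((1+ρ)/2)^z) := by
            have hsplit : (((1+ρ)/2 : ℝ))^z = (1/2)^z * (1+ρ)^z := by
              rw [← mul_pow]; ring_nf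
            rw [hsplit]; ring
    · filter_upwards with θ hθ
      apply Summable.mul_left
      exact summable_geometric_of_lt_one (by linarith)
        ((div_lt_one (by norm_num)).2 (by linarith))
    · exact intervalIntegrable_const
    · filter_upwards with θ hθ
      apply HasSum.const_smul
      set v := circleMap 0 ρ θ
      have hv : ‖v‖ = ρ := hcm θ
      have hmain := (hasSum_psi_mul t ht k hρ hv).mul_right
        (v⁻¹ * (1 + 2*v) * Complex.exp (-v * (t:ℂ)) * (v * (1 + v)) ^ (-(j : ℤ)))
      apply hmain.congr_fun
      intro z
      ring
  -- pointwise identification with psi * phi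
  have key := stepA.mul_left cj
  apply key.congr_fun
  intro z
  have hphi : phi t ρ j (z:ℤ) = cj * ∮ v in C(0, ρ),
      v⁻¹ * (1 + 2*v) * Complex.exp (-v * (t:ℂ)) * (1 + v) ^ ((z:ℤ) - 1) *
        (v * (1 + v)) ^ (-(j : ℤ)) := rfl
  rw [hphi, circleIntegral.integral_const_mul]
  ring

/-- Biorthogonality (Lemma 4.1): for `t > 0`, `n ≥ 1` and `0 ≤ j, k ≤ n-1`, the series
`∑_{z ∈ ℤ} ψ_k(z) φ_j(z)` converges absolutely and equals `δ_{k,j}`. -/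
theorem statement3 (t : ℝ) (ht : 0 < t) (n : ℕ) (hn : 1 ≤ n) (j k : ℕ)
    (hj : j < n) (hk : k < n) (r r' : ℝ)
    (hr : r ∈ Set.Ioo (0 : ℝ) 1) (hr' : r' ∈ Set.Ioo (0 : ℝ) 1) :
    Summable (fun z : ℤ => psi t r (k : ℤ) z * phi t r' j z) ∧
      ∑' z : ℤ, psi t r (k : ℤ) z * phi t r' j z = if k = j then 1 else 0 := by
  have hρ0 := hr'.1
  have hρ1 := hr'.2
  have hsp : ∀ v : ℂ, v ∈ sphere (0:ℂ) r' → ‖v‖ = r' := by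
    intro v hv; simpa [Complex.dist_eq] using hv
  -- Evaluate the limiting contour integral
  have hintr : (∮ v in C(0, r'),
      ((-1 : ℂ) ^ ((k:ℤ)) * (Complex.exp (v * (t:ℂ)) * (v * (1 + v)) ^ ((k:ℤ)) * (1 + v)⁻¹)) *
        (v⁻¹ * (1 + 2*v) * Complex.exp (-v * (t:ℂ)) * (v * (1 + v)) ^ (-(j : ℤ)))) =
      (-1 : ℂ) ^ ((k:ℤ)) *
        (if ((k:ℤ) - (j:ℤ)) = 0 then 2 * ↑Real.pi * Complex.I else 0) := by
    have hcongr : (∮ v in C(0, r'),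
        ((-1 : ℂ) ^ ((k:ℤ)) * (Complex.exp (v * (t:ℂ)) * (v * (1 + v)) ^ ((k:ℤ)) * (1 + v)⁻¹)) *
          (v⁻¹ * (1 + 2*v) * Complex.exp (-v * (t:ℂ)) * (v * (1 + v)) ^ (-(j : ℤ)))) =
        ∮ v in C(0, r'), (-1 : ℂ) ^ ((k:ℤ)) *
          (v⁻¹ * (1 + v)⁻¹ * (1 + 2*v) * (v * (1 + v)) ^ ((k:ℤ) - (j:ℤ))) := by
      apply circleIntegral.integral_congr hρ0.le
      intro v hv
      obtain ⟨h1v, h1v', hv1, hv0⟩ := one_add_bounds hr' (hsp v hv)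
      have hu0 : v * (1 + v) ≠ 0 := mul_ne_zero hv0 hv1
      have hexp : Complex.exp (v * (t:ℂ)) * Complex.exp (-v * (t:ℂ)) = 1 := by
        have h0 : v * (t:ℂ) + -v * (t:ℂ) = 0 := by ring
        rw [← Complex.exp_add, h0, Complex.exp_zero]
      have hzp : (v * (1 + v)) ^ ((k:ℤ)) * (v * (1 + v)) ^ (-(j : ℤ)) =
          (v * (1 + v)) ^ ((k:ℤ) - (j:ℤ)) := by
        rw [sub_eq_add_neg, zpow_add₀ hu0]
      have hrearr : ((-1 : ℂ) ^ ((k:ℤ)) * (Complex.exp (v * (t:ℂ)) * (v * (1 + v)) ^ ((k:ℤ)) *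
            (1 + v)⁻¹)) * (v⁻¹ * (1 + 2*v) * Complex.exp (-v * (t:ℂ)) *
            (v * (1 + v)) ^ (-(j : ℤ))) =
          (Complex.exp (v * (t:ℂ)) * Complex.exp (-v * (t:ℂ))) *
            ((v * (1 + v)) ^ ((k:ℤ)) * (v * (1 + v)) ^ (-(j : ℤ))) *
            ((-1 : ℂ) ^ ((k:ℤ)) * (v⁻¹ * (1 + v)⁻¹ * (1 + 2*v))) := by ring
      beta_reduce
      rw [hrearr, hexp, hzp, one_mul]
      ring
    rw [hcongr, circleIntegral.integral_const_mul, final_integral hr' ((k:ℤ) - (j:ℤ))]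
  have htot := hasSum_outer t ht k j hr'
  rw [hintr] at htot
  -- simplify the constant
  have h2pi : (2 * ↑Real.pi * Complex.I) ≠ 0 := by
    simp [Real.pi_ne_zero, Complex.I_ne_zero, Complex.ofReal_ne_zero]
  have hval : ((-1 : ℂ) ^ j / (2 * ↑Real.pi * Complex.I)) *
      ((-1 : ℂ) ^ ((k:ℤ)) *
        (if ((k:ℤ) - (j:ℤ)) = 0 then 2 * ↑Real.pi * Complex.I else 0)) =
      (if k = j then 1 else 0) := by
    rcases eq_or_ne k j with hkj | hkj
    · subst hkj
      rw [if_pos (sub_self _), if_pos rfl, zpow_natCast]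
      have hsq : ((-1 : ℂ)) ^ k * ((-1 : ℂ)) ^ k = 1 := by
        rw [← mul_pow]; norm_num
      field_simp
      try linear_combination (2 * ↑Real.pi * Complex.I) * hsq
      try linear_combination hsq
    · rw [if_neg (sub_ne_zero.2 (fun h => hkj (Int.natCast_inj.1 h))), if_neg hkj,
        mul_zero, mul_zero]
  rw [hval] at htot
  -- change psi radius from 2 to r
  have htot' : HasSum (fun z : ℕ => psi t r (k:ℤ) (z:ℤ) * phi t r' j (z:ℤ))
      (if k = j then 1 else 0) := by
    apply htot.congr_fun
    intro z
    rw [psi_radius t k (z:ℤ) (R := 2) hr.1 (by linarith [hr.2])]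
  -- extend to a sum over ℤ
  have hsupp : ∀ x : ℤ, x ∉ Set.range ((↑) : ℕ → ℤ) →
      psi t r (k:ℤ) x * phi t r' j x = 0 := by
    intro x hx
    have hneg : x < 0 := by
      by_contra h
      push_neg at h
      exact hx ⟨x.toNat, Int.toNat_of_nonneg h⟩
    rw [psi_neg t r hr.1.le k hneg, zero_mul]
  have hZ : HasSum (fun z : ℤ => psi t r (k:ℤ) z * phi t r' j z) (if k = j then 1 else 0) :=
    (Function.Injective.hasSum_iff (fun a b h => Int.natCast_inj.mp h) hsupp).1 htot'
  exact ⟨hZ.summable, hZ.tsum_eq⟩
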